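/- Let a be a nonzero compact element of a multiplicative lattice Q. Then a is strongly hollow if and only if there exists a greatest element among elements of Q that are not ≥ a. When a is strongly hollow, this greatest element equals κ(a) := ⋁{ k ∈ Q | a ≰ k }. -/

import Mathlib

/-- A multiplicative lattice: a complete lattice with a commutative, associative
multiplication distributing over arbitrary joins, with the top element as identity. -/
class MulLattice (Q : Type*) extends CompleteLattice Q, CommMonoid Q where
  mul_sSup : ∀ (a : Q) (s : Set Q), a * sSup s = ⨆ x ∈ s, a * x
  one_eq_top : (1 : Q) = ⊤

section OrderDefs
variable {Q : Type*} [CompleteLattice Q]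

/-- `a` is strongly hollow if `a ≤ j ⊔ k` implies `a ≤ j` or `a ≤ k`. -/
def StronglyHollow (a : Q) : Prop := ∀ j k : Q, a ≤ j ⊔ k → a ≤ j ∨ a ≤ k

/-- `a` is completely strongly hollow if whenever `a` is below an arbitrary join,
it is below one of the joinands. -/
def CompletelyStronglyHollow (a : Q) : Prop :=
  ∀ s : Set Q, a ≤ sSup s → ∃ x ∈ s, a ≤ x

/-- `κ(a)` is the join of all elements not above `a`. -/
def kappa (a : Q) : Q := sSup {k : Q | ¬ a ≤ k}

end OrderDefs

/-- The mlResidual `(a : b)`. -/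
def mlResidual {Q : Type*} [MulLattice Q] (a b : Q) : Q := sSup {x : Q | x * b ≤ a}

lemma sh_finset {Q : Type*} [CompleteLattice Q] {a : Q} (ha : a ≠ ⊥)
    (hsh : StronglyHollow a) (t : Finset Q) (h : a ≤ t.sup id) :
    ∃ x ∈ t, a ≤ x := by
  classical
  induction t using Finset.induction_on with
  | empty => simp at h; exact absurd h ha
  | @insert b s hx ih =>
    rw [Finset.sup_insert] at h
    rcases hsh _ _ h with h1 | h2
    · exact ⟨b, Finset.mem_insert_self _ _, h1⟩
    · obtain ⟨x, hxs, hax⟩ := ih h2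
      exact ⟨x, Finset.mem_insert_of_mem hxs, hax⟩

lemma sh_kappa {Q : Type*} [CompleteLattice Q] {a : Q} (ha : a ≠ ⊥)
    (hcomp : IsCompactElement a) (hsh : StronglyHollow a) :
    IsGreatest {k : Q | ¬ a ≤ k} (kappa a) := by
  constructor
  · intro hle
    obtain ⟨t, hts, hat⟩ := (CompleteLattice.isCompactElement_iff_exists_le_sSup_of_le_sSup (k := a)).1 hcomp _ hle
    obtain ⟨x, hxt, hax⟩ := sh_finset ha hsh t hat
    exact hts hxt hax
  · intro k hk
    exact le_sSup hk

theorem stmt6 {Q : Type*} [MulLattice Q] (a : Q) (ha : a ≠ ⊥)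
    (hcomp : IsCompactElement a) :
    (StronglyHollow a ↔ ∃ g : Q, IsGreatest {k : Q | ¬ a ≤ k} g) ∧
      (StronglyHollow a → IsGreatest {k : Q | ¬ a ≤ k} (kappa a)) := by
  refine ⟨⟨fun hsh => ⟨kappa a, sh_kappa ha hcomp hsh⟩, ?_⟩, sh_kappa ha hcomp⟩
  rintro ⟨g, hg, hgub⟩ j k hjk
  by_contra h
  push_neg at h
  exact hg (hjk.trans (sup_le (hgub h.1) (hgub h.2)))
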